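/- Let M ≥ 2 be an integer, h = 1/M, τ > 0, x_i = i·h, D_i = x_i(1 − x_i). Suppose the interior vector (f'_1,…,f'_{M−1}) with f'_0 := 0 added conventionally satisfies the interior Scheme 3 equations (f'_i − f_i)/τ − (D_{i+1} f'_{i+1} − 2D_i f'_i + D_{i−1} f'_{i−1})/h² = 0 for i = 1,…,M−1 (with D_0 f'_0 and D_M f'_M interpreted as 0), and that f'_i ≥ 0 for i = 1,…,M−1. Then the interior discrete mass is non-increasing: Σ_{i=1}^{M−1} f'_i h ≤ Σ_{i=1}^{M−1} f_i h. -/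

import Mathlib

open Finset

/-- For nonnegative solutions of the interior Scheme 3 equations, the interior
discrete mass is non-increasing: `Σ_{i=1}^{M−1} f'_i h ≤ Σ_{i=1}^{M−1} f_i h`.
Here `D_i = x_i(1−x_i)`, `x_i = i·h`, `h = 1/M` (so `D₀ = D_M = 0`). -/
theorem scheme3_interior_mass_nonincreasing
    (M : ℕ) (hM : 2 ≤ M) (h τ : ℝ) (hh : h = 1 / (M : ℝ)) (hτ : 0 < τ)
    (f f' : ℕ → ℝ) (hf'0 : f' 0 = 0)
    (heq : ∀ i, 1 ≤ i → i ≤ M - 1 →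
      (f' i - f i) / τ
        - ((((i : ℝ) + 1) * h * (1 - ((i : ℝ) + 1) * h)) * f' (i + 1)
            - 2 * ((i : ℝ) * h * (1 - (i : ℝ) * h)) * f' i
            + (((i : ℝ) - 1) * h * (1 - ((i : ℝ) - 1) * h)) * f' (i - 1)) / h ^ 2 = 0)
    (hpos : ∀ i, 1 ≤ i → i ≤ M - 1 → 0 ≤ f' i) :
    ∑ i ∈ Finset.Ico 1 M, f' i * h ≤ ∑ i ∈ Finset.Ico 1 M, f i * h := by
  have hMR : (2:ℝ) ≤ (M:ℝ) := by exact_mod_cast hM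
  have hM0 : (M:ℝ) ≠ 0 := by linarith
  have hhpos : 0 < h := by rw [hh]; positivity
  have hh2 : (0:ℝ) < h ^ 2 := by positivity
  set g : ℕ → ℝ := fun i => (i:ℝ) * h * (1 - (i:ℝ) * h) * f' i with hg
  have key : ∀ i ∈ Finset.Ico 1 M,
      f' i - f i = τ / h ^ 2 * (g (i+1) - 2 * g i + g (i-1)) := by
    intro i hi
    simp only [Finset.mem_Ico] at hi
    obtain ⟨h1, h2⟩ := hi
    have h2' : i ≤ M - 1 := by omega
    have he := heq i h1 h2'
    have hc : ((i:ℝ) - 1) = ((i - 1 : ℕ) : ℝ) := by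
      rw [Nat.cast_sub h1]; simp
    simp only [hg]
    push_cast
    rw [← hc]
    have hτ' : τ ≠ 0 := ne_of_gt hτ
    have hh2' : h ^ 2 ≠ 0 := ne_of_gt hh2
    field_simp at he ⊢
    push_cast
    linarith [he]
  have tele : ∑ i ∈ Finset.Ico 1 M, (g (i+1) - 2 * g i + g (i-1))
      = (g M - g 1) - (g (M-1) - g 0) := by
    have e1 : ∑ i ∈ Finset.Ico 1 M, (g (i+1) - 2 * g i + g (i-1))
        = ∑ i ∈ Finset.Ico 1 M, ((g (i+1) - g i) - (g i - g (i-1))) := by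
      apply Finset.sum_congr rfl; intro i _; ring
    rw [e1, Finset.sum_sub_distrib]
    have t1 : ∑ i ∈ Finset.Ico 1 M, (g (i+1) - g i) = g M - g 1 := by
      rw [Finset.sum_Ico_eq_sum_range]
      have := Finset.sum_range_sub (fun j => g (j + 1)) (M - 1)
      rw [show M - 1 + 1 = M from by omega] at this
      rw [← this]
      apply Finset.sum_congr rfl
      intro j _
      have : 1 + j = j + 1 := by omega
      rw [this]
    have t2 : ∑ i ∈ Finset.Ico 1 M, (g i - g (i-1)) = g (M-1) - g 0 := by
      rw [Finset.sum_Ico_eq_sum_range]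
      have := Finset.sum_range_sub g (M - 1)
      rw [← this]
      apply Finset.sum_congr rfl
      intro j _
      have e2 : 1 + j - 1 = j := by omega
      rw [e2]
      have e : 1 + j = j + 1 := by omega
      rw [e]
    rw [t1, t2]
  have hgM : g M = 0 := by
    simp only [hg, hh]
    field_simp
    ring
  have hg0 : g 0 = 0 := by simp [hg, hf'0]
  have hg1 : 0 ≤ g 1 := by
    have hf1 : 0 ≤ f' 1 := hpos 1 le_rfl (by omega)
    have hD : 0 ≤ (1:ℝ) * h * (1 - 1 * h) := by
      have : h ≤ 1/2 := by rw [hh]; rw [div_le_div_iff₀ (by linarith) (by norm_num)]; linarith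
      nlinarith
    simpa [hg] using mul_nonneg hD hf1
  have hgM1 : 0 ≤ g (M-1) := by
    have hf1 : 0 ≤ f' (M-1) := hpos (M-1) (by omega) le_rfl
    have hcast : ((M - 1 : ℕ) : ℝ) = (M:ℝ) - 1 := by
      rw [Nat.cast_sub (by omega)]; simp
    have hD : 0 ≤ ((M-1:ℕ):ℝ) * h * (1 - ((M-1:ℕ):ℝ) * h) := by
      rw [hcast, hh]
      have h1 : ((M:ℝ) - 1) * (1 / M) = 1 - 1/M := by field_simp
      rw [h1]
      have : (0:ℝ) < 1 / M := by positivity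
      have : (1:ℝ)/M ≤ 1/2 := by
        rw [div_le_div_iff₀ (by linarith) (by norm_num)]; linarith
      nlinarith [this]
    simpa [hg] using mul_nonneg hD hf1
  have hsum : ∑ i ∈ Finset.Ico 1 M, (f' i - f i)
      = τ / h ^ 2 * ((g M - g 1) - (g (M-1) - g 0)) := by
    rw [Finset.sum_congr rfl key, ← Finset.mul_sum, tele]
  have hfinal : ∑ i ∈ Finset.Ico 1 M, (f' i - f i) ≤ 0 := by
    rw [hsum, hgM, hg0]
    have hτh : 0 ≤ τ / h ^ 2 := by positivity
    nlinarith [mul_nonneg hτh (add_nonneg hg1 hgM1)]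
  have : ∑ i ∈ Finset.Ico 1 M, f' i ≤ ∑ i ∈ Finset.Ico 1 M, f i := by
    rw [Finset.sum_sub_distrib] at hfinal; linarith
  calc ∑ i ∈ Finset.Ico 1 M, f' i * h = (∑ i ∈ Finset.Ico 1 M, f' i) * h := by
        rw [Finset.sum_mul]
    _ ≤ (∑ i ∈ Finset.Ico 1 M, f i) * h := by
        apply mul_le_mul_of_nonneg_right this (le_of_lt hhpos)
    _ = ∑ i ∈ Finset.Ico 1 M, f i * h := by rw [Finset.sum_mul]
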